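/- For a sequence of k-stretched Kronecker coefficients given by a quasipolynomial (polynomials P_0,…,P_{p-1} with g_k = P_i(k) when k ≡ i mod p) satisfying the superadditivity property g_{k+ℓ} ≥ g_k whenever g_ℓ ≠ 0, all the polynomials P_i that are not identically zero have the same degree. -/

import Mathlib

open Polynomial Filter

lemma myPosLead (P : Polynomial ℝ) (hP : P ≠ 0)
    (h : ∀ N : ℕ, ∃ n : ℕ, N ≤ n ∧ 0 ≤ P.eval (n : ℝ)) : 0 < P.leadingCoeff := by
  rcases lt_or_ge 0 P.degree with hd | hd
  · by_contra hle
    push_neg at hle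
    have ht := P.tendsto_atBot_of_leadingCoeff_nonpos hd hle
    obtain ⟨B, hB⟩ := Filter.eventually_atTop.mp (ht.eventually (eventually_lt_atBot (0:ℝ)))
    obtain ⟨n, hn, hpos⟩ := h ⌈B⌉₊
    have hBn : B ≤ (n : ℝ) := le_trans (Nat.le_ceil B) (by exact_mod_cast hn)
    exact absurd hpos (not_le.mpr (hB n hBn))
  · have h0 : P = Polynomial.C (P.coeff 0) := Polynomial.eq_C_of_degree_le_zero hd
    obtain ⟨n, _, hpos⟩ := h 0
    have hc : P.coeff 0 ≠ 0 := fun hc => hP (by rw [h0, hc, map_zero])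
    rw [h0, Polynomial.eval_C] at hpos
    have hnd : P.natDegree = 0 := Nat.le_zero.mp (Polynomial.natDegree_le_iff_degree_le.mpr hd)
    have hl : P.leadingCoeff = P.coeff 0 := by rw [Polynomial.leadingCoeff, hnd]
    rw [hl]
    exact lt_of_le_of_ne hpos (Ne.symm hc)

lemma myDegLe (P Q : Polynomial ℝ) (c : ℝ)
    (h : ∀ N : ℕ, ∃ n : ℕ, N ≤ n ∧ 0 ≤ P.eval (n : ℝ) ∧ P.eval (n : ℝ) ≤ Q.eval ((n : ℝ) + c)) :
    P.degree ≤ Q.degree := by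
  rcases eq_or_ne P 0 with rfl | hP
  · simp
  by_contra hlt
  push_neg at hlt
  set Qc := Polynomial.taylor c Q with hQcdef
  have hQc : Qc.degree < P.degree := by
    rcases eq_or_ne Q 0 with rfl | hQ
    · simpa [hQcdef] using hlt
    · have h1 : Qc ≠ 0 := fun h0 => hQ (Polynomial.taylor_injective c (by rw [map_zero]; exact h0))
      rw [Polynomial.degree_eq_natDegree h1, hQcdef, Polynomial.natDegree_taylor,
        ← Polynomial.degree_eq_natDegree hQ]
      exact hlt
  have hlead : 0 < P.leadingCoeff :=
    myPosLead P hP (fun N => (h N).imp fun n hn => ⟨hn.1, hn.2.1⟩)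
  have hR : P - Qc ≠ 0 := by
    intro h0
    have := Polynomial.degree_sub_eq_left_of_degree_lt hQc
    rw [h0] at this
    exact hP (Polynomial.degree_eq_bot.mp (by rw [← this]; simp))
  have hR2 : Qc - P ≠ 0 := fun h0 => hR (by rw [← neg_sub]; simpa using congrArg Neg.neg h0)
  have hpos2 : 0 < (Qc - P).leadingCoeff := by
    refine myPosLead _ hR2 (fun N => ?_)
    obtain ⟨n, hn, hnn, hle⟩ := h N
    refine ⟨n, hn, ?_⟩
    have : Qc.eval (n : ℝ) = Q.eval ((n : ℝ) + c) := Polynomial.taylor_eval c Q (n : ℝ)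
    simp only [Polynomial.eval_sub, this, sub_nonneg]
    exact hle
  have hneg : (Qc - P).leadingCoeff = -P.leadingCoeff := by
    have h2 : Qc - P = -(P - Qc) := by ring
    rw [h2, Polynomial.leadingCoeff_neg, Polynomial.leadingCoeff_sub_of_degree_lt hQc]
  rw [hneg] at hpos2
  linarith

theorem quasi_deg_le
    (p : ℕ) (hp : 0 < p) (P : Fin p → Polynomial ℝ) (g : ℕ → ℕ)
    (hg : ∀ k : ℕ, (g k : ℝ) = (P ⟨k % p, Nat.mod_lt k hp⟩).eval (k : ℝ))
    (hmono : ∀ k l : ℕ, 1 ≤ k → 1 ≤ l → g l ≠ 0 → g k ≤ g (k + l))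
    (i j : Fin p) (hi : P i ≠ 0) (hj : P j ≠ 0) :
    (P i).degree ≤ (P j).degree := by
  obtain ⟨q, rfl⟩ : ∃ q, p = q + 1 := ⟨p - 1, by omega⟩
  -- evaluation on a residue class
  have heval : ∀ (r : Fin (q + 1)) (n : ℕ), n % (q + 1) = r.val →
      (g n : ℝ) = (P r).eval (n : ℝ) := by
    intro r n hr
    have he : (⟨n % (q + 1), Nat.mod_lt n hp⟩ : Fin (q + 1)) = r := Fin.ext hr
    rw [hg n, he]
  -- tail nonvanishing
  have tail : ∀ r : Fin (q + 1), P r ≠ 0 →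
      ∃ N : ℕ, ∀ n : ℕ, N ≤ n → n % (q + 1) = r.val → g n ≠ 0 := by
    intro r hr
    obtain ⟨x₀, hx₀⟩ := (P r).exists_max_root hr
    refine ⟨⌈x₀⌉₊ + 1, fun n hn hmod hzero => ?_⟩
    have hroot : (P r).IsRoot (n : ℝ) := by
      have := heval r n hmod
      rw [hzero] at this
      simpa [Polynomial.IsRoot] using this.symm
    have h1 := hx₀ _ hroot
    have h2 : x₀ ≤ (⌈x₀⌉₊ : ℝ) := Nat.le_ceil x₀
    have h3 : ((⌈x₀⌉₊ : ℕ) : ℝ) < (n : ℝ) := by exact_mod_cast hn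
    linarith
  -- iterated monotonicity
  have hiter : ∀ l : ℕ, 1 ≤ l → g l ≠ 0 → ∀ (t k : ℕ), 1 ≤ k → g k ≤ g (k + t * l) := by
    intro l hl hgl t
    induction t with
    | zero => intro k hk; simp
    | succ t ih =>
      intro k hk
      calc g k ≤ g (k + t * l) := ih k hk
        _ ≤ g (k + t * l + l) := hmono _ l (le_trans hk (Nat.le_add_right _ _)) hl hgl
        _ = g (k + (t + 1) * l) := by ring_nf
  obtain ⟨Ni, hNi⟩ := tail i hi
  obtain ⟨Nj, hNj⟩ := tail j hj
  set li : ℕ := i.val + (q + 1) * (Ni + 1) with hlidef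
  set lj : ℕ := j.val + (q + 1) * (Nj + 1) with hljdef
  have hbi : Ni + 1 ≤ (q + 1) * (Ni + 1) := Nat.le_mul_of_pos_left _ (by omega)
  have hbj : Nj + 1 ≤ (q + 1) * (Nj + 1) := Nat.le_mul_of_pos_left _ (by omega)
  have hlimod : li % (q + 1) = i.val := by
    rw [hlidef, Nat.add_mul_mod_self_left, Nat.mod_eq_of_lt i.isLt]
  have hljmod : lj % (q + 1) = j.val := by
    rw [hljdef, Nat.add_mul_mod_self_left, Nat.mod_eq_of_lt j.isLt]
  have hli1 : 1 ≤ li := by omega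
  have hlj1 : 1 ≤ lj := by omega
  have hgli : g li ≠ 0 := hNi li (by omega) hlimod
  have hglj : g lj ≠ 0 := hNj lj (by omega) hljmod
  have hClt : (i.val + j.val) % (q + 1) < q + 1 := Nat.mod_lt _ hp
  -- step 1 : deg P i ≤ deg P C
  have step1 : (P i).degree ≤ (P ⟨(i.val + j.val) % (q + 1), hClt⟩).degree := by
    apply myDegLe _ _ (lj : ℝ)
    intro N
    have hbn : N + 1 ≤ (q + 1) * (N + 1) := Nat.le_mul_of_pos_left _ (by omega)
    refine ⟨i.val + (q + 1) * (N + 1), by omega, ?_, ?_⟩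
    · rw [← heval i _ (by rw [Nat.add_mul_mod_self_left, Nat.mod_eq_of_lt i.isLt])]
      exact_mod_cast Nat.zero_le _
    · set n : ℕ := i.val + (q + 1) * (N + 1) with hndef
      have hnmod : n % (q + 1) = i.val := by
        rw [hndef, Nat.add_mul_mod_self_left, Nat.mod_eq_of_lt i.isLt]
      have hsum : (n + lj) % (q + 1) = (i.val + j.val) % (q + 1) := by
        rw [Nat.add_mod, hnmod, hljmod]
      have hle : g n ≤ g (n + lj) := hmono n lj (by omega) hlj1 hglj
      have e1 := heval i n hnmod
      have e2 := heval ⟨(i.val + j.val) % (q + 1), hClt⟩ (n + lj) hsum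
      rw [← e1, show ((n : ℝ) + (lj : ℝ)) = (((n + lj : ℕ)) : ℝ) by push_cast; ring, ← e2]
      exact_mod_cast hle
  -- step 2 : deg P C ≤ deg P j
  have step2 : (P ⟨(i.val + j.val) % (q + 1), hClt⟩).degree ≤ (P j).degree := by
    apply myDegLe _ _ ((q * li : ℕ) : ℝ)
    intro N
    have hbn : N + 1 ≤ (q + 1) * (N + 1) := Nat.le_mul_of_pos_left _ (by omega)
    refine ⟨(i.val + j.val) + (q + 1) * (N + 1), by omega, ?_, ?_⟩
    · rw [← heval ⟨(i.val + j.val) % (q + 1), hClt⟩ _ (by rw [Nat.add_mul_mod_self_left])]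
      exact_mod_cast Nat.zero_le _
    · set m : ℕ := (i.val + j.val) + (q + 1) * (N + 1) with hmdef
      have hmmod : m % (q + 1) = (i.val + j.val) % (q + 1) := by
        rw [hmdef, Nat.add_mul_mod_self_left]
      have hkey : m + q * li = j.val + (q + 1) * (i.val + (N + 1) + q * (Ni + 1)) := by
        rw [hmdef, hlidef]; ring
      have hsum : (m + q * li) % (q + 1) = j.val := by
        rw [hkey, Nat.add_mul_mod_self_left, Nat.mod_eq_of_lt j.isLt]
      have hle : g m ≤ g (m + q * li) := hiter li hli1 hgli q m (by omega)
      have e1 := heval ⟨(i.val + j.val) % (q + 1), hClt⟩ m hmmod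
      have e2 := heval j (m + q * li) hsum
      rw [← e1, show ((m : ℝ) + ((q * li : ℕ) : ℝ)) = (((m + q * li : ℕ)) : ℝ) by
        push_cast; ring, ← e2]
      exact_mod_cast hle
  exact le_trans step1 step2

/-- Let `g : ℕ → ℕ` be a quasipolynomial sequence of period `p`, given by real polynomials
`P_0, …, P_{p-1}` via `g k = P_{k mod p}(k)`, and suppose it satisfies the superadditivity
(monotonicity) property: `g (k + ℓ) ≥ g k` whenever `k, ℓ ≥ 1` and `g ℓ ≠ 0`. Then any two of
the polynomials `P_i, P_j` that are not identically zero have the same degree. -/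
theorem quasipolynomial_same_degree
    (p : ℕ) (hp : 0 < p) (P : Fin p → Polynomial ℝ) (g : ℕ → ℕ)
    (hg : ∀ k : ℕ, (g k : ℝ) = (P ⟨k % p, Nat.mod_lt k hp⟩).eval (k : ℝ))
    (hmono : ∀ k l : ℕ, 1 ≤ k → 1 ≤ l → g l ≠ 0 → g k ≤ g (k + l))
    (i j : Fin p) (hi : P i ≠ 0) (hj : P j ≠ 0) :
    (P i).degree = (P j).degree :=
  le_antisymm (quasi_deg_le p hp P g hg hmono i j hi hj)
    (quasi_deg_le p hp P g hg hmono j i hj hi)
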